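/- Fix an integer k ≥ 3. There exist constants C₁(k) > 0 and C₂(k) > 0, depending only on k, such that the following holds. Consider the process Boot3(t) on Q_{k,n} with base threshold ⌈N/2⌉ (where N = Σ_{i=1}^k C(n,i)) and t = ⌈C₂(k)·n^{k/2}⌉, where each vertex is initially infected independently with probability p = 1/2 − C₁(k)·√(log n)/n^{k/2}. Then P(A_3 = A_2) → 1 as n → ∞. -/

import Mathlib

open Finset Filter
open scoped Classical

noncomputable section

/-- The infected set after `i` steps of `r`-neighbour bootstrap percolation on the graph `G`,
starting from the initial infected set `A0`:
`A_{i+1} = A_i ∪ {v : |N(v) ∩ A_i| ≥ r}`. -/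
def bootSets {V : Type*} [Fintype V] [DecidableEq V] (G : SimpleGraph V) (r : ℕ)
    (A0 : Finset V) : ℕ → Finset V
  | 0 => A0
  | i + 1 =>
      bootSets G r A0 i ∪
        Finset.univ.filter fun v => r ≤ (G.neighborFinset v ∩ bootSets G r A0 i).card

/-- `A0` percolates under the `r`-neighbour bootstrap process on `G`. -/
def percolates {V : Type*} [Fintype V] [DecidableEq V] (G : SimpleGraph V) (r : ℕ)
    (A0 : Finset V) : Prop :=
  ∃ i, bootSets G r A0 i = Finset.univ

/-- The probability that the initial infected set is exactly `A`, when every vertex is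
infected independently with probability `p`. -/
def configProb {V : Type*} [Fintype V] [DecidableEq V] (p : ℝ) (A : Finset V) : ℝ :=
  p ^ A.card * (1 - p) ^ (Fintype.card V - A.card)

/-- The probability of the event `E` about the initial infected set, when every vertex is
infected independently with probability `p`. -/
def probEvent {V : Type*} [Fintype V] [DecidableEq V] (p : ℝ) (E : Finset V → Prop) : ℝ :=
  ∑ A : Finset V, if E A then configProb p A else 0

/-- The generalized hypercube `Q_{k,n}`: vertices are `{0,1}^n`, two vertices being adjacent
iff their Hamming distance is between `1` and `k`.  The usual hypercube `Q_n` is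
`cubeGraph n 1`. -/
def cubeGraph (n k : ℕ) : SimpleGraph (Fin n → Bool) where
  Adj x y := 1 ≤ hammingDist x y ∧ hammingDist x y ≤ k
  symm := by
    constructor
    intro x y h
    rwa [hammingDist_comm]
  loopless := by
    constructor
    intro x h
    simp [hammingDist_self] at h

/-- The critical probability for `r`-neighbour bootstrap percolation on `Q_{k,n}` where every
vertex is initially infected independently with probability `p`:
the supremum of all `p ∈ (0,1)` for which percolation has probability at most `1/2`. -/
def critProb (n k r : ℕ) : ℝ :=
  sSup {p : ℝ | p ∈ Set.Ioo (0 : ℝ) 1 ∧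
    probEvent p (fun A0 => percolates (cubeGraph n k) r A0) ≤ 1 / 2}

/-- The `Boot1(t)` process with base threshold `r`: at step `1` the threshold is `r - t`,
afterwards it is `r`. -/
def boot1Sets {V : Type*} [Fintype V] [DecidableEq V] (G : SimpleGraph V) (r t : ℕ)
    (A0 : Finset V) : ℕ → Finset V
  | 0 => A0
  | 1 => A0 ∪ Finset.univ.filter fun v => r - t ≤ (G.neighborFinset v ∩ A0).card
  | i + 2 =>
      boot1Sets G r t A0 (i + 1) ∪
        Finset.univ.filter fun v =>
          r ≤ (G.neighborFinset v ∩ boot1Sets G r t A0 (i + 1)).card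

/-- The `Boot2(t)` (= `Boot3(t)`) process with base threshold `r`: at step `1` the threshold
is `r - 2t`, at step `2` it is `r - t`, and afterwards it is `r`. -/
def boot2Sets {V : Type*} [Fintype V] [DecidableEq V] (G : SimpleGraph V) (r t : ℕ)
    (A0 : Finset V) : ℕ → Finset V
  | 0 => A0
  | 1 => A0 ∪ Finset.univ.filter fun v => r - 2 * t ≤ (G.neighborFinset v ∩ A0).card
  | 2 =>
      boot2Sets G r t A0 1 ∪
        Finset.univ.filter fun v =>
          r - t ≤ (G.neighborFinset v ∩ boot2Sets G r t A0 1).card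
  | i + 3 =>
      boot2Sets G r t A0 (i + 2) ∪
        Finset.univ.filter fun v =>
          r ≤ (G.neighborFinset v ∩ boot2Sets G r t A0 (i + 2)).card

section aux
variable {V : Type*} [Fintype V] [DecidableEq V] {p : ℝ}

lemma configProb_eq_prod (p : ℝ) (A : Finset V) :
    configProb p A = (∏ _w ∈ A, p) * ∏ _w ∈ (Finset.univ \ A), (1 - p) := by
  rw [configProb, prod_const, prod_const, card_sdiff_of_subset (subset_univ A), card_univ]

lemma sum_configProb (p : ℝ) : ∑ A : Finset V, configProb p A = 1 := by
  have h := Finset.prod_add (fun _ : V => p) (fun _ : V => (1 - p)) Finset.univ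
  simp only [add_sub_cancel, prod_const, one_pow, card_univ] at h
  rw [← Finset.powerset_univ]
  rw [h]
  apply Finset.sum_congr rfl
  intro A _
  rw [configProb, card_sdiff_of_subset (subset_univ A), card_univ]

lemma configProb_nonneg (hp0 : 0 ≤ p) (hp1 : p ≤ 1) (A : Finset V) : 0 ≤ configProb p A :=
  mul_nonneg (pow_nonneg hp0 _) (pow_nonneg (by linarith) _)

lemma probEvent_nonneg (hp0 : 0 ≤ p) (hp1 : p ≤ 1) (E : Finset V → Prop) :
    0 ≤ probEvent p E := by
  apply Finset.sum_nonneg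
  intro A _
  split
  · exact configProb_nonneg hp0 hp1 A
  · exact le_refl 0

lemma probEvent_add_compl (p : ℝ) (E : Finset V → Prop) :
    probEvent p E + probEvent p (fun A => ¬ E A) = 1 := by
  rw [probEvent, probEvent, ← Finset.sum_add_distrib, ← sum_configProb (V := V) p]
  apply Finset.sum_congr rfl
  intro A _
  by_cases h : E A <;> simp [h]

lemma probEvent_mono (hp0 : 0 ≤ p) (hp1 : p ≤ 1) {E F : Finset V → Prop}
    (h : ∀ A, E A → F A) : probEvent p E ≤ probEvent p F := by
  apply Finset.sum_le_sum
  intro A _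
  by_cases hE : E A
  · simp [hE, h A hE]
  · simp only [hE, if_false]
    split
    · exact configProb_nonneg hp0 hp1 A
    · exact le_refl 0

lemma probEvent_union_bound (hp0 : 0 ≤ p) (hp1 : p ≤ 1) {ι : Type*} (s : Finset ι)
    (Q : ι → Finset V → Prop) :
    probEvent p (fun A => ∃ x ∈ s, Q x A) ≤ ∑ x ∈ s, probEvent p (Q x) := by
  unfold probEvent
  rw [Finset.sum_comm]
  apply Finset.sum_le_sum
  intro A _
  by_cases hE : ∃ x ∈ s, Q x A
  · obtain ⟨x, hxs, hx⟩ := hE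
    rw [if_pos ⟨x, hxs, hx⟩]
    calc configProb p A = (if Q x A then configProb p A else 0) := by rw [if_pos hx]
    _ ≤ ∑ y ∈ s, if Q y A then configProb p A else 0 := by
        apply Finset.single_le_sum (fun y _ => ?_) hxs
        split
        · exact configProb_nonneg hp0 hp1 A
        · exact le_refl 0
  · rw [if_neg hE]
    apply Finset.sum_nonneg
    intro y _
    split
    · exact configProb_nonneg hp0 hp1 A
    · exact le_refl 0

lemma exp_le_one_add_add_sq {x : ℝ} (h0 : 0 ≤ x) (h1 : x ≤ 1) :
    Real.exp x ≤ 1 + x + x ^ 2 := by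
  have h := Real.exp_bound' h0 h1 (n := 2) (by norm_num)
  simp [Finset.sum_range_succ, Nat.factorial] at h
  nlinarith [sq_nonneg x]

lemma factor_bound {x : ℝ} (h0 : 0 ≤ x) (h1 : x ≤ 1) (hp0 : 0 ≤ p) (hp1 : p ≤ 1) :
    1 - p + p * Real.exp x ≤ Real.exp (p * x + p * x ^ 2) := by
  have h := exp_le_one_add_add_sq h0 h1
  have h2 : 1 - p + p * Real.exp x ≤ 1 + (p * x + p * x ^ 2) := by nlinarith
  have h3 := Real.add_one_le_exp (p * x + p * x ^ 2)
  linarith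

lemma mgf_identity (p θ : ℝ) (m : V → ℕ) :
    ∑ A : Finset V, configProb p A * Real.exp (θ * ∑ w ∈ A, (m w : ℝ)) =
      ∏ w : V, (1 - p + p * Real.exp (θ * (m w : ℝ))) := by
  have h := Finset.prod_add (fun w : V => p * Real.exp (θ * (m w : ℝ)))
    (fun _ : V => (1 - p)) Finset.univ
  have heq : ∀ w : V, (1 - p + p * Real.exp (θ * (m w : ℝ))) =
      (p * Real.exp (θ * (m w : ℝ)) + (1 - p)) := fun w => by ring
  rw [Finset.prod_congr rfl (fun w _ => heq w), h, ← Finset.powerset_univ]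
  apply Finset.sum_congr rfl
  intro A _
  rw [Finset.prod_mul_distrib, Finset.prod_const, Finset.prod_const,
    card_sdiff_of_subset (subset_univ A), card_univ, ← Real.exp_sum, configProb, Finset.mul_sum]
  ring

lemma probEvent_sum_ge_le (hp0 : 0 ≤ p) (hp1 : p ≤ 1) (m : V → ℕ) (θ s : ℝ) (hθ : 0 < θ)
    (hm : ∀ w : V, θ * (m w : ℝ) ≤ 1) :
    probEvent p (fun A => s ≤ ∑ w ∈ A, (m w : ℝ)) ≤
      Real.exp (-(θ * s) + p * θ * (∑ w : V, (m w : ℝ)) + p * θ ^ 2 * ∑ w : V, (m w : ℝ) ^ 2) := by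
  have step1 : probEvent p (fun A => s ≤ ∑ w ∈ A, (m w : ℝ)) ≤
      ∑ A : Finset V, configProb p A * Real.exp (θ * ((∑ w ∈ A, (m w : ℝ)) - s)) := by
    apply Finset.sum_le_sum
    intro A _
    split
    · rename_i hA
      nth_rewrite 1 [show configProb p A = configProb p A * 1 by ring]
      apply mul_le_mul_of_nonneg_left _ (configProb_nonneg hp0 hp1 A)
      rw [show (1 : ℝ) = Real.exp 0 by simp]
      apply Real.exp_le_exp.2
      have h0 : 0 ≤ (∑ w ∈ A, (m w : ℝ)) - s := by linarith
      exact mul_nonneg hθ.le h0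
    · have h1 := configProb_nonneg hp0 hp1 A
      have h2 := (Real.exp_pos (θ * ((∑ w ∈ A, (m w : ℝ)) - s))).le
      positivity
  have step2 : ∑ A : Finset V, configProb p A * Real.exp (θ * ((∑ w ∈ A, (m w : ℝ)) - s)) =
      Real.exp (-(θ * s)) * ∏ w : V, (1 - p + p * Real.exp (θ * (m w : ℝ))) := by
    rw [← mgf_identity p θ m, Finset.mul_sum]
    apply Finset.sum_congr rfl
    intro A _
    have e : θ * ((∑ w ∈ A, (m w : ℝ)) - s) = -(θ * s) + θ * ∑ w ∈ A, (m w : ℝ) := by ring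
    rw [e, Real.exp_add]
    ring
  have step3 : ∏ w : V, (1 - p + p * Real.exp (θ * (m w : ℝ))) ≤
      ∏ w : V, Real.exp (p * (θ * (m w : ℝ)) + p * (θ * (m w : ℝ)) ^ 2) := by
    apply Finset.prod_le_prod
    · intro w _
      have := Real.exp_pos (θ * (m w : ℝ))
      nlinarith
    · intro w _
      exact factor_bound (by positivity) (hm w) hp0 hp1
  calc probEvent p (fun A => s ≤ ∑ w ∈ A, (m w : ℝ))
      ≤ Real.exp (-(θ * s)) * ∏ w : V, (1 - p + p * Real.exp (θ * (m w : ℝ))) := by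
        rw [← step2]; exact step1
    _ ≤ Real.exp (-(θ * s)) * ∏ w : V, Real.exp (p * (θ * (m w : ℝ)) + p * (θ * (m w : ℝ)) ^ 2) :=
        mul_le_mul_of_nonneg_left step3 (Real.exp_pos _).le
    _ = _ := by
        have e1 : ∑ x : V, p * (θ * (m x : ℝ)) = p * θ * ∑ w : V, (m w : ℝ) := by
          rw [Finset.mul_sum]
          exact Finset.sum_congr rfl (fun w _ => by ring)
        have e2 : ∑ x : V, p * (θ * (m x : ℝ)) ^ 2 = p * θ ^ 2 * ∑ w : V, (m w : ℝ) ^ 2 := by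
          rw [Finset.mul_sum]
          exact Finset.sum_congr rfl (fun w _ => by ring)
        rw [← Real.exp_sum, ← Real.exp_add, Finset.sum_add_distrib, e1, e2, add_assoc]

end aux

section cube

variable {n k : ℕ}

/-- The set of coordinates where `y` differs from `x`. -/
def diffSet {n : ℕ} (x y : Fin n → Bool) : Finset (Fin n) :=
  Finset.univ.filter fun i => y i ≠ x i

lemma diffSet_card {x y : Fin n → Bool} : (diffSet x y).card = hammingDist x y := by
  rw [hammingDist]
  congr 1
  ext i
  simp [diffSet, ne_comm]

lemma diffSet_injective (x : Fin n → Bool) : Function.Injective (diffSet x) := by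
  intro y z h
  funext i
  have hy : i ∈ diffSet x y ↔ i ∈ diffSet x z := by rw [h]
  simp only [diffSet, Finset.mem_filter, Finset.mem_univ, true_and] at hy
  have : ∀ a b c : Bool, (b ≠ a ↔ c ≠ a) → b = c := by decide
  exact this (x i) (y i) (z i) hy

lemma mem_cube_nbr {x y : Fin n → Bool} :
    y ∈ (cubeGraph n k).neighborFinset x ↔ 1 ≤ hammingDist x y ∧ hammingDist x y ≤ k := by
  rw [SimpleGraph.mem_neighborFinset]
  exact Iff.rfl

lemma cube_deg_le (x : Fin n → Bool) :
    ((cubeGraph n k).neighborFinset x).card ≤ ∑ i ∈ Finset.Icc 1 k, n.choose i := by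
  have h1 : ((cubeGraph n k).neighborFinset x).card ≤
      ((Finset.Icc 1 k).biUnion fun i => Finset.powersetCard i (Finset.univ : Finset (Fin n))).card := by
    apply Finset.card_le_card_of_injOn (diffSet x)
    · intro y hy
      rw [Finset.mem_coe, mem_cube_nbr] at hy
      rw [Finset.mem_coe, Finset.mem_biUnion]
      refine ⟨(diffSet x y).card, ?_, ?_⟩
      · rw [Finset.mem_Icc, diffSet_card]
        exact hy
      · rw [Finset.mem_powersetCard]
        exact ⟨Finset.subset_univ _, rfl⟩
    · exact Function.Injective.injOn (diffSet_injective x)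
  refine h1.trans ((Finset.card_biUnion_le).trans ?_)
  apply Finset.sum_le_sum
  intro i _
  rw [Finset.card_powersetCard, Finset.card_univ, Fintype.card_fin]

lemma erase_count {s : Fin n} :
    ((Finset.powersetCard k (Finset.univ : Finset (Fin n))).filter fun T => s ∈ T).card
      ≤ (n - 1).choose (k - 1) := by
  have : (((Finset.powersetCard k (Finset.univ : Finset (Fin n))).filter fun T => s ∈ T).card)
      ≤ (Finset.powersetCard (k - 1) ((Finset.univ : Finset (Fin n)).erase s)).card := by
    apply Finset.card_le_card_of_injOn (fun T => T.erase s)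
    · intro T hT
      rw [Finset.mem_coe, Finset.mem_filter, Finset.mem_powersetCard] at hT
      rw [Finset.mem_coe, Finset.mem_powersetCard]
      constructor
      · exact Finset.erase_subset_erase s (Finset.subset_univ T)
      · rw [Finset.card_erase_of_mem hT.2, hT.1.2]
    · intro T1 h1 T2 h2 h
      rw [Finset.mem_coe, Finset.mem_filter] at h1 h2
      have h' : T1.erase s = T2.erase s := h
      rw [← Finset.insert_erase h1.2, h', Finset.insert_erase h2.2]
  refine this.trans ?_
  rw [Finset.card_powersetCard, Finset.card_erase_of_mem (Finset.mem_univ s),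
    Finset.card_univ, Fintype.card_fin]

lemma cube_codeg_le (hn : 1 ≤ n) (hk : 1 ≤ k) {u u' : Fin n → Bool} (h : u ≠ u') :
    (((cubeGraph n k).neighborFinset u) ∩ ((cubeGraph n k).neighborFinset u')).card
      ≤ 3 * k * n ^ (k - 1) := by
  rcases Finset.eq_empty_or_nonempty
    (((cubeGraph n k).neighborFinset u) ∩ ((cubeGraph n k).neighborFinset u')) with he | hne
  · rw [he]
    simp
  obtain ⟨y0, hy0⟩ := hne
  rw [Finset.mem_inter, mem_cube_nbr, mem_cube_nbr] at hy0
  set S := diffSet u u' with hS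
  have hSne : S.Nonempty := by
    rcases Function.ne_iff.1 h with ⟨i, hi⟩
    exact ⟨i, by simp [hS, diffSet, Ne.symm hi]⟩
  have hScard : S.card ≤ 2 * k := by
    rw [diffSet_card]
    have := hammingDist_triangle u y0 u'
    have h2 : hammingDist y0 u' = hammingDist u' y0 := hammingDist_comm _ _
    omega
  -- the target set
  set W := ((Finset.Icc 1 (k-1)).biUnion fun i => Finset.powersetCard i (Finset.univ : Finset (Fin n)))
      ∪ S.biUnion (fun s => (Finset.powersetCard k (Finset.univ : Finset (Fin n))).filter
          fun T => s ∈ T) with hW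
  have hmain : (((cubeGraph n k).neighborFinset u) ∩ ((cubeGraph n k).neighborFinset u')).card
      ≤ W.card := by
    apply Finset.card_le_card_of_injOn (diffSet u)
    · intro y hy
      rw [Finset.mem_coe, Finset.mem_inter, mem_cube_nbr, mem_cube_nbr] at hy
      have hcard1 : 1 ≤ (diffSet u y).card := by rw [diffSet_card]; exact hy.1.1
      have hcardk : (diffSet u y).card ≤ k := by rw [diffSet_card]; exact hy.1.2
      rw [Finset.mem_coe, hW, Finset.mem_union]
      by_cases hsmall : (diffSet u y).card ≤ k - 1
      · left
        rw [Finset.mem_biUnion]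
        exact ⟨(diffSet u y).card, Finset.mem_Icc.2 ⟨hcard1, hsmall⟩,
          Finset.mem_powersetCard.2 ⟨Finset.subset_univ _, rfl⟩⟩
      · right
        have hcardeq : (diffSet u y).card = k := by omega
        -- show some s ∈ S is in diffSet u y
        by_cases hint : ∃ s ∈ S, s ∈ diffSet u y
        · obtain ⟨s, hs1, hs2⟩ := hint
          rw [Finset.mem_biUnion]
          exact ⟨s, hs1, Finset.mem_filter.2 ⟨Finset.mem_powersetCard.2
            ⟨Finset.subset_univ _, hcardeq⟩, hs2⟩⟩
        · exfalso
          push_neg at hint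
          have hdisj : Disjoint (diffSet u y) S := by
            rw [Finset.disjoint_left]
            intro a ha haS
            exact hint a haS ha
          have hsub : (diffSet u y) ∪ S ⊆ Finset.univ.filter fun i => y i ≠ u' i := by
            intro i hi
            rw [Finset.mem_union] at hi
            rw [Finset.mem_filter]
            refine ⟨Finset.mem_univ i, ?_⟩
            rcases hi with hiT | hiS
            · have h1 : y i ≠ u i := by
                have := Finset.mem_filter.1 hiT
                simpa [diffSet] using this.2
              have h2 : ¬ (u' i ≠ u i) := by
                intro hcon
                exact (Finset.disjoint_left.1 hdisj hiT) (by simp [hS, diffSet, hcon])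
              push_neg at h2
              rw [← h2] at h1
              exact h1
            · have h1 : u' i ≠ u i := by
                have := Finset.mem_filter.1 hiS
                simpa [hS, diffSet] using this.2
              have h2 : ¬ (y i ≠ u i) := by
                intro hcon
                exact (Finset.disjoint_left.1 hdisj (by simp [diffSet, hcon])) hiS
              push_neg at h2
              rw [h2]
              exact fun hc => h1 hc.symm
          have hle : hammingDist y u' ≤ k := by
            have := hy.2.2
            rwa [hammingDist_comm]
          have hge : (diffSet u y ∪ S).card ≤ hammingDist y u' := by
            rw [hammingDist]
            exact Finset.card_le_card hsub
          rw [Finset.card_union_of_disjoint hdisj, hcardeq] at hge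
          have := hSne.card_pos
          omega
    · exact Function.Injective.injOn (diffSet_injective u)
  refine hmain.trans ?_
  have hWle : W.card ≤ (k - 1) * n ^ (k - 1) + 2 * k * n ^ (k - 1) := by
    rw [hW]
    refine (Finset.card_union_le _ _).trans ?_
    have hleft : ((Finset.Icc 1 (k-1)).biUnion fun i =>
        Finset.powersetCard i (Finset.univ : Finset (Fin n))).card ≤ (k - 1) * n ^ (k - 1) := by
      refine (Finset.card_biUnion_le).trans ?_
      have : ∀ i ∈ Finset.Icc 1 (k-1),
          (Finset.powersetCard i (Finset.univ : Finset (Fin n))).card ≤ n ^ (k - 1) := by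
        intro i hi
        rw [Finset.card_powersetCard, Finset.card_univ, Fintype.card_fin]
        exact (Nat.choose_le_pow n i).trans
          (Nat.pow_le_pow_right hn (Finset.mem_Icc.1 hi).2)
      refine (Finset.sum_le_sum this).trans ?_
      rw [Finset.sum_const, Nat.card_Icc, smul_eq_mul]
      have he : k - 1 + 1 - 1 = k - 1 := by omega
      rw [he]
    have hright : (S.biUnion (fun s => (Finset.powersetCard k
        (Finset.univ : Finset (Fin n))).filter fun T => s ∈ T)).card ≤ 2 * k * n ^ (k - 1) := by
      refine (Finset.card_biUnion_le).trans ?_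
      have hper : ∀ s ∈ S, ((Finset.powersetCard k (Finset.univ : Finset (Fin n))).filter
          fun T => s ∈ T).card ≤ n ^ (k - 1) := by
        intro s _
        refine (erase_count).trans ?_
        exact (Nat.choose_le_pow _ _).trans (Nat.pow_le_pow_left (by omega) _)
      refine (Finset.sum_le_sum hper).trans ?_
      rw [Finset.sum_const, smul_eq_mul]
      exact Nat.mul_le_mul_right _ hScard
    omega
  refine hWle.trans ?_
  calc (k - 1) * n ^ (k - 1) + 2 * k * n ^ (k - 1)
      ≤ k * n ^ (k - 1) + 2 * k * n ^ (k - 1) :=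
        Nat.add_le_add_right (Nat.mul_le_mul_right _ (Nat.sub_le k 1)) _
    _ = 3 * k * n ^ (k - 1) := by ring

end cube

section doublecount
variable {V : Type*} [Fintype V] [DecidableEq V]

lemma card_nbr_inter (G : SimpleGraph V) (U : Finset V) (w : V) :
    (G.neighborFinset w ∩ U).card = ∑ u ∈ U, if w ∈ G.neighborFinset u then 1 else 0 := by
  rw [Finset.inter_comm, ← Finset.filter_mem_eq_inter, Finset.card_filter]
  apply Finset.sum_congr rfl
  intro u _
  congr 1
  rw [SimpleGraph.mem_neighborFinset, SimpleGraph.mem_neighborFinset, G.adj_comm]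

lemma sum_card_nbr_inter (G : SimpleGraph V) (U : Finset V) :
    ∑ w : V, (G.neighborFinset w ∩ U).card = ∑ u ∈ U, (G.neighborFinset u).card := by
  simp only [card_nbr_inter]
  rw [Finset.sum_comm]
  apply Finset.sum_congr rfl
  intro u _
  rw [← Finset.card_filter]
  congr 1
  rw [Finset.filter_mem_eq_inter, Finset.univ_inter]

lemma sum_card_nbr_inter_sq (G : SimpleGraph V) (U : Finset V) :
    ∑ w : V, ((G.neighborFinset w ∩ U).card) ^ 2 =
      ∑ u ∈ U, ∑ u' ∈ U, (G.neighborFinset u ∩ G.neighborFinset u').card := by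
  have key : ∀ w : V, ((G.neighborFinset w ∩ U).card) ^ 2 =
      ∑ u ∈ U, ∑ u' ∈ U, if w ∈ G.neighborFinset u ∩ G.neighborFinset u' then 1 else 0 := by
    intro w
    rw [card_nbr_inter, sq, Finset.sum_mul_sum]
    apply Finset.sum_congr rfl
    intro u _
    apply Finset.sum_congr rfl
    intro u' _
    simp only [Finset.mem_inter]
    split_ifs <;> simp_all
  simp only [key]
  rw [Finset.sum_comm]
  apply Finset.sum_congr rfl
  intro u _
  rw [Finset.sum_comm]
  apply Finset.sum_congr rfl
  intro u' _
  rw [← Finset.card_filter]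
  congr 1
  rw [Finset.filter_mem_eq_inter, Finset.univ_inter]

end doublecount

section determ
variable {V : Type*} [Fintype V] [DecidableEq V]

lemma boot2_bad_structure (G : SimpleGraph V) {r t j : ℕ} (A0 : Finset V)
    (hrt : 2 * t + 1 ≤ r) (hj : j ≤ t + 1)
    (hbad : boot2Sets G r t A0 3 ≠ boot2Sets G r t A0 2) :
    ∃ v : V, ∃ U ∈ Finset.powersetCard j (G.neighborFinset v),
      ∀ u ∈ U, r - 2 * t ≤ ((G.neighborFinset u) ∩ A0).card := by
  set A1 := boot2Sets G r t A0 1 with hA1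
  set A2 := boot2Sets G r t A0 2 with hA2
  -- A2 ≠ A1
  have hA2ne : A2 ≠ A1 := by
    intro hEq
    apply hbad
    show boot2Sets G r t A0 (0 + 3) = A2
    rw [boot2Sets]
    apply Finset.union_eq_left.2
    intro v hv
    rw [Finset.mem_filter] at hv
    have : r - t ≤ (G.neighborFinset v ∩ A1).card := by
      rw [← hEq]
      exact le_trans (Nat.sub_le r t) hv.2
    have hvA2 : v ∈ A2 := by
      rw [hA2, boot2Sets]
      exact Finset.mem_union_right _ (Finset.mem_filter.2 ⟨Finset.mem_univ v, this⟩)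
    exact hvA2
  -- get v ∈ A2 \ A1
  have hsub : A1 ⊆ A2 := by
    rw [hA2]
    show A1 ⊆ boot2Sets G r t A0 2
    rw [boot2Sets]
    exact Finset.subset_union_left
  obtain ⟨v, hvA2, hvA1⟩ : ∃ v, v ∈ A2 ∧ v ∉ A1 := by
    by_contra hc
    push_neg at hc
    exact hA2ne (Finset.Subset.antisymm (fun x hx => hc x hx) hsub)
  have hv2 : r - t ≤ (G.neighborFinset v ∩ A1).card := by
    rw [hA2, boot2Sets] at hvA2
    rcases Finset.mem_union.1 hvA2 with h | h
    · exact absurd h hvA1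
    · exact (Finset.mem_filter.1 h).2
  have hvA0 : (G.neighborFinset v ∩ A0).card < r - 2 * t := by
    by_contra hc
    push_neg at hc
    apply hvA1
    rw [hA1, boot2Sets]
    exact Finset.mem_union_right _ (Finset.mem_filter.2 ⟨Finset.mem_univ v, hc⟩)
  set F1 := Finset.univ.filter
    (fun u => r - 2 * t ≤ (G.neighborFinset u ∩ A0).card) with hF1
  have hsplit : (G.neighborFinset v ∩ A1).card ≤
      (G.neighborFinset v ∩ A0).card + (G.neighborFinset v ∩ F1).card := by
    have : G.neighborFinset v ∩ A1 ⊆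
        (G.neighborFinset v ∩ A0) ∪ (G.neighborFinset v ∩ F1) := by
      rw [hA1]
      show G.neighborFinset v ∩ (A0 ∪ F1) ⊆ _
      rw [Finset.inter_union_distrib_left]
    exact le_trans (Finset.card_le_card this) (Finset.card_union_le _ _)
  have hF1card : t + 1 ≤ (G.neighborFinset v ∩ F1).card := by omega
  obtain ⟨U, hU1, hU2⟩ := Finset.exists_subset_card_eq
    (le_trans hj hF1card : j ≤ (G.neighborFinset v ∩ F1).card)
  refine ⟨v, U, ?_, ?_⟩
  · rw [Finset.mem_powersetCard]
    exact ⟨hU1.trans Finset.inter_subset_left, hU2⟩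
  · intro u hu
    have := hU1 hu
    rw [Finset.mem_inter, hF1, Finset.mem_filter] at this
    exact this.2.2

end determ

section master

lemma sum_card_nbr_inter' {V : Type*} [Fintype V] [DecidableEq V]
    (G : SimpleGraph V) (U A : Finset V) :
    ∑ w ∈ A, (G.neighborFinset w ∩ U).card = ∑ u ∈ U, (G.neighborFinset u ∩ A).card := by
  simp only [card_nbr_inter]
  rw [Finset.sum_comm]
  apply Finset.sum_congr rfl
  intro u _
  apply Finset.sum_congr rfl
  intro w _
  simp only [SimpleGraph.mem_neighborFinset]
  rw [G.adj_comm]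

variable {n k : ℕ} {p θ : ℝ} {t : ℕ}

lemma master_bound (hk : 1 ≤ k) (hn : 1 ≤ n)
    (hp0 : 0 ≤ p) (hp1 : p ≤ 1/2) (hθ : 0 < θ) (hθm : θ * n ≤ 1)
    (hrt : 2 * t + 1 ≤ ⌈((∑ i ∈ Finset.Icc 1 k, n.choose i : ℕ) : ℝ) / 2⌉₊)
    (hjt : n ≤ t + 1) :
    probEvent p (fun A0 : Finset (Fin n → Bool) =>
        ¬ (boot2Sets (cubeGraph n k) ⌈((∑ i ∈ Finset.Icc 1 k, n.choose i : ℕ) : ℝ) / 2⌉₊ t A0 3 =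
          boot2Sets (cubeGraph n k) ⌈((∑ i ∈ Finset.Icc 1 k, n.choose i : ℕ) : ℝ) / 2⌉₊ t A0 2)) ≤
      (2:ℝ) ^ n * ((∑ i ∈ Finset.Icc 1 k, n.choose i : ℕ) : ℝ) ^ n *
        Real.exp (-(θ * ((n : ℝ) * ((⌈((∑ i ∈ Finset.Icc 1 k, n.choose i : ℕ) : ℝ) / 2⌉₊ : ℝ) - 2 * t)))
          + p * θ * ((n : ℝ) * ((∑ i ∈ Finset.Icc 1 k, n.choose i : ℕ) : ℝ))
          + p * θ ^ 2 * ((n : ℝ) * ((∑ i ∈ Finset.Icc 1 k, n.choose i : ℕ) : ℝ)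
              + (n : ℝ) ^ 2 * (3 * k * n ^ (k-1) : ℕ))) := by
  classical
  set N : ℕ := ∑ i ∈ Finset.Icc 1 k, n.choose i with hN
  set r : ℕ := ⌈((N : ℕ) : ℝ) / 2⌉₊ with hr
  set G : SimpleGraph (Fin n → Bool) := cubeGraph n k with hG
  set Λ : ℕ := 3 * k * n ^ (k-1) with hΛ
  set EXP : ℝ := Real.exp (-(θ * ((n : ℝ) * ((r : ℝ) - 2 * t)))
          + p * θ * ((n : ℝ) * (N : ℝ))
          + p * θ ^ 2 * ((n : ℝ) * (N : ℝ) + (n : ℝ) ^ 2 * (Λ : ℝ))) with hEXP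
  have hp1' : p ≤ 1 := le_trans hp1 (by norm_num)
  -- step 1: union bound
  have step1 : probEvent p (fun A0 : Finset (Fin n → Bool) =>
      ¬ (boot2Sets G r t A0 3 = boot2Sets G r t A0 2)) ≤
      ∑ v : Fin n → Bool, ∑ U ∈ Finset.powersetCard n (G.neighborFinset v),
        probEvent p (fun A0 => ∀ u ∈ U, r - 2*t ≤ ((G.neighborFinset u) ∩ A0).card) := by
    calc probEvent p (fun A0 : Finset (Fin n → Bool) =>
        ¬ (boot2Sets G r t A0 3 = boot2Sets G r t A0 2))
        ≤ probEvent p (fun A0 => ∃ v ∈ (Finset.univ : Finset (Fin n → Bool)),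
            ∃ U ∈ Finset.powersetCard n (G.neighborFinset v),
              ∀ u ∈ U, r - 2*t ≤ ((G.neighborFinset u) ∩ A0).card) := by
          apply probEvent_mono hp0 hp1'
          intro A0 hbad
          obtain ⟨v, U, hU, hall⟩ := boot2_bad_structure G A0 hrt hjt hbad
          exact ⟨v, Finset.mem_univ v, U, hU, hall⟩
      _ ≤ ∑ v : Fin n → Bool, probEvent p (fun A0 =>
            ∃ U ∈ Finset.powersetCard n (G.neighborFinset v),
              ∀ u ∈ U, r - 2*t ≤ ((G.neighborFinset u) ∩ A0).card) :=
          probEvent_union_bound hp0 hp1' _ _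
      _ ≤ _ := by
          apply Finset.sum_le_sum
          intro v _
          exact probEvent_union_bound hp0 hp1' _ _
  -- step 2 : per-U Chernoff bound
  have step2 : ∀ v : Fin n → Bool, ∀ U ∈ Finset.powersetCard n (G.neighborFinset v),
      probEvent p (fun A0 => ∀ u ∈ U, r - 2*t ≤ ((G.neighborFinset u) ∩ A0).card) ≤ EXP := by
    intro v U hU
    rw [Finset.mem_powersetCard] at hU
    obtain ⟨hUsub, hUcard⟩ := hU
    set m : (Fin n → Bool) → ℕ := fun w => ((G.neighborFinset w) ∩ U).card with hm
    -- the event implies the sum event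
    have himp : ∀ A : Finset (Fin n → Bool),
        (∀ u ∈ U, r - 2*t ≤ ((G.neighborFinset u) ∩ A).card) →
        ((n : ℝ) * ((r:ℝ) - 2*t) ≤ ∑ w ∈ A, (m w : ℝ)) := by
      intro A hA
      have h1 : (n * (r - 2*t) : ℕ) ≤ ∑ w ∈ A, m w := by
        rw [hm]
        rw [sum_card_nbr_inter' G U A]
        calc n * (r - 2*t) = ∑ _u ∈ U, (r - 2*t) := by
              rw [Finset.sum_const, hUcard, smul_eq_mul]
          _ ≤ ∑ u ∈ U, ((G.neighborFinset u) ∩ A).card := Finset.sum_le_sum hA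
      have h2 : ((n * (r - 2*t) : ℕ) : ℝ) ≤ ∑ w ∈ A, (m w : ℝ) := by
        rw [← Nat.cast_sum]
        exact_mod_cast h1
      calc (n : ℝ) * ((r:ℝ) - 2*t) = ((n * (r - 2*t) : ℕ) : ℝ) := by
            rw [Nat.cast_mul, Nat.cast_sub (by omega)]
            push_cast
            ring
        _ ≤ _ := h2
    have hmono := probEvent_mono hp0 hp1' himp
    -- Chernoff
    have hmle : ∀ w, θ * (m w : ℝ) ≤ 1 := by
      intro w
      have : m w ≤ n :=
        le_trans (Finset.card_le_card Finset.inter_subset_right) (le_of_eq hUcard)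
      calc θ * (m w : ℝ) ≤ θ * n := by
            apply mul_le_mul_of_nonneg_left _ hθ.le
            exact_mod_cast this
        _ ≤ 1 := hθm
    have hchern := probEvent_sum_ge_le hp0 hp1' m θ ((n : ℝ) * ((r:ℝ) - 2*t)) hθ hmle
    -- bound the sums
    have hsum1 : ∑ w : Fin n → Bool, (m w : ℝ) ≤ (n : ℝ) * (N : ℝ) := by
      have h1 : ∑ w : Fin n → Bool, m w ≤ n * N := by
        rw [hm, sum_card_nbr_inter G U]
        calc ∑ u ∈ U, (G.neighborFinset u).card ≤ ∑ _u ∈ U, N :=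
              Finset.sum_le_sum (fun u _ => cube_deg_le u)
          _ = n * N := by rw [Finset.sum_const, hUcard, smul_eq_mul]
      rw [← Nat.cast_sum]
      exact_mod_cast h1
    have hsum2 : ∑ w : Fin n → Bool, ((m w : ℝ)) ^ 2 ≤ (n : ℝ) * (N : ℝ) + (n:ℝ)^2 * (Λ : ℝ) := by
      have h1 : ∑ w : Fin n → Bool, (m w) ^ 2 ≤ n * N + n^2 * Λ := by
        rw [hm, sum_card_nbr_inter_sq G U]
        have hinner : ∀ u ∈ U, ∑ u' ∈ U, (G.neighborFinset u ∩ G.neighborFinset u').card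
            ≤ N + n * Λ := by
          intro u hu
          rw [← Finset.sum_erase_add U _ hu]
          have hdiag : (G.neighborFinset u ∩ G.neighborFinset u).card ≤ N := by
            rw [Finset.inter_self]
            exact cube_deg_le u
          have hoff : ∑ u' ∈ U.erase u, (G.neighborFinset u ∩ G.neighborFinset u').card
              ≤ n * Λ := by
            calc ∑ u' ∈ U.erase u, (G.neighborFinset u ∩ G.neighborFinset u').card
                ≤ ∑ _u' ∈ U.erase u, Λ := by
                  apply Finset.sum_le_sum
                  intro u' hu'
                  have hne : u ≠ u' := (Finset.ne_of_mem_erase hu').symm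
                  exact cube_codeg_le hn hk hne
              _ = (U.erase u).card * Λ := by rw [Finset.sum_const, smul_eq_mul]
              _ ≤ n * Λ := by
                  apply Nat.mul_le_mul_right
                  exact le_trans (Finset.card_erase_le) (le_of_eq hUcard)
          omega
        calc ∑ u ∈ U, ∑ u' ∈ U, (G.neighborFinset u ∩ G.neighborFinset u').card
            ≤ ∑ _u ∈ U, (N + n * Λ) := Finset.sum_le_sum hinner
          _ = n * N + n^2 * Λ := by rw [Finset.sum_const, hUcard, smul_eq_mul]; ring
      calc ∑ w : Fin n → Bool, ((m w : ℝ)) ^ 2 = ((∑ w : Fin n → Bool, (m w)^2 : ℕ) : ℝ) := by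
            rw [Nat.cast_sum]
            push_cast
            rfl
        _ ≤ _ := by
            refine le_trans (Nat.cast_le.2 h1) ?_
            push_cast
            ring_nf
            exact le_refl _
    refine le_trans hmono (le_trans hchern ?_)
    rw [hEXP]
    apply Real.exp_le_exp.2
    have t1 : p * θ * (∑ w : Fin n → Bool, (m w : ℝ)) ≤ p * θ * ((n : ℝ) * (N : ℝ)) :=
      mul_le_mul_of_nonneg_left hsum1 (by positivity)
    have t2 : p * θ^2 * (∑ w : Fin n → Bool, ((m w : ℝ))^2) ≤
        p * θ^2 * ((n : ℝ) * (N : ℝ) + (n:ℝ)^2 * (Λ : ℝ)) :=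
      mul_le_mul_of_nonneg_left hsum2 (by positivity)
    linarith
  -- combine
  refine le_trans step1 ?_
  have hcount : ∀ v : Fin n → Bool,
      ((Finset.powersetCard n (G.neighborFinset v)).card : ℝ) ≤ ((N:ℕ):ℝ) ^ n := by
    intro v
    rw [Finset.card_powersetCard]
    have h1 : ((G.neighborFinset v).card).choose n ≤ N.choose n :=
      Nat.choose_le_choose n (cube_deg_le v)
    have h2 : N.choose n ≤ N ^ n := Nat.choose_le_pow _ _
    calc (((G.neighborFinset v).card).choose n : ℝ) ≤ ((N ^ n : ℕ) : ℝ) := by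
          exact_mod_cast le_trans h1 h2
      _ = ((N:ℕ):ℝ) ^ n := by push_cast; ring
  calc ∑ v : Fin n → Bool, ∑ U ∈ Finset.powersetCard n (G.neighborFinset v),
        probEvent p (fun A0 => ∀ u ∈ U, r - 2*t ≤ ((G.neighborFinset u) ∩ A0).card)
      ≤ ∑ v : Fin n → Bool, ∑ _U ∈ Finset.powersetCard n (G.neighborFinset v), EXP := by
        apply Finset.sum_le_sum
        intro v _
        apply Finset.sum_le_sum
        intro U hU
        exact step2 v U hU
    _ = ∑ v : Fin n → Bool, ((Finset.powersetCard n (G.neighborFinset v)).card : ℝ) * EXP := by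
        apply Finset.sum_congr rfl
        intro v _
        rw [Finset.sum_const, nsmul_eq_mul]
    _ ≤ ∑ _v : Fin n → Bool, ((N:ℕ):ℝ) ^ n * EXP := by
        apply Finset.sum_le_sum
        intro v _
        exact mul_le_mul_of_nonneg_right (hcount v) (Real.exp_pos _).le
    _ = (2:ℝ) ^ n * (((N:ℕ):ℝ) ^ n * EXP) := by
        rw [Finset.sum_const, nsmul_eq_mul, Finset.card_univ]
        congr 1
        rw [Fintype.card_fun, Fintype.card_fin, Fintype.card_bool]
        push_cast
        ring
    _ = _ := by rw [← mul_assoc]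

end master

section final

set_option maxHeartbeats 1000000 in
theorem boot3_aux (k : ℕ) (hk : 3 ≤ k) :
    ∃ C₁ C₂ : ℝ, 0 < C₁ ∧ 0 < C₂ ∧
      Filter.Tendsto
        (fun n : ℕ =>
          probEvent (1 / 2 - C₁ * Real.sqrt (Real.log (n : ℝ)) / (n : ℝ) ^ ((k : ℝ) / 2))
            (fun A0 : Finset (Fin n → Bool) =>
              boot2Sets (cubeGraph n k) ⌈((∑ i ∈ Finset.Icc 1 k, n.choose i : ℕ) : ℝ) / 2⌉₊
                  ⌈C₂ * (n : ℝ) ^ ((k : ℝ) / 2)⌉₊ A0 3 =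
                boot2Sets (cubeGraph n k) ⌈((∑ i ∈ Finset.Icc 1 k, n.choose i : ℕ) : ℝ) / 2⌉₊
                  ⌈C₂ * (n : ℝ) ^ ((k : ℝ) / 2)⌉₊ A0 2))
        Filter.atTop (nhds 1) := by
  classical
  set κ : ℕ := 2 ^ k * k.factorial with hκ
  have hκpos : 0 < κ := by positivity
  set C₁ : ℝ := ((2 * κ * (3 * k + 4) : ℕ) : ℝ) with hC₁
  have hC₁pos : 0 < C₁ := by
    rw [hC₁]
    have : 0 < 2 * κ * (3 * k + 4) := by positivity
    exact_mod_cast this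
  refine ⟨C₁, 1, hC₁pos, one_pos, ?_⟩
  set f : ℕ → ℝ := fun n =>
      probEvent (1 / 2 - C₁ * Real.sqrt (Real.log (n : ℝ)) / (n : ℝ) ^ ((k : ℝ) / 2))
        (fun A0 : Finset (Fin n → Bool) =>
          boot2Sets (cubeGraph n k) ⌈((∑ i ∈ Finset.Icc 1 k, n.choose i : ℕ) : ℝ) / 2⌉₊
              ⌈(1:ℝ) * (n : ℝ) ^ ((k : ℝ) / 2)⌉₊ A0 3 =
            boot2Sets (cubeGraph n k) ⌈((∑ i ∈ Finset.Icc 1 k, n.choose i : ℕ) : ℝ) / 2⌉₊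
              ⌈(1:ℝ) * (n : ℝ) ^ ((k : ℝ) / 2)⌉₊ A0 2) with hf
  show Filter.Tendsto f Filter.atTop (nhds 1)
  -- the eventual sandwich
  have key : ∀ᶠ n : ℕ in Filter.atTop,
      1 - Real.exp (-(n : ℝ)) ≤ f n ∧ f n ≤ 1 := by
    have F1 : ∀ᶠ n : ℕ in Filter.atTop, 2 * k ≤ n := Filter.eventually_ge_atTop _
    have F2 : ∀ᶠ n : ℕ in Filter.atTop, 2 ≤ n := Filter.eventually_ge_atTop _
    have Fcast : Filter.Tendsto (fun n : ℕ => (n : ℝ)) Filter.atTop Filter.atTop :=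
      tendsto_natCast_atTop_atTop
    have F3 : ∀ᶠ n : ℕ in Filter.atTop, 2 * C₁ ≤ (n : ℝ) :=
      Fcast.eventually_ge_atTop _
    have F4 : ∀ᶠ n : ℕ in Filter.atTop, 10 * (κ : ℝ) ≤ (n : ℝ) :=
      Fcast.eventually_ge_atTop _
    have Flog : Filter.Tendsto (fun n : ℕ => Real.log (n : ℝ)) Filter.atTop Filter.atTop :=
      Real.tendsto_log_atTop.comp Fcast
    have F6 : ∀ᶠ n : ℕ in Filter.atTop, Real.log (2 * k) + 1 ≤ 4 * Real.log (n : ℝ) := by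
      have := Flog.eventually_ge_atTop ((Real.log (2 * k) + 1) / 4)
      filter_upwards [this] with n hn
      linarith only [hn]
    have F8 : ∀ᶠ n : ℕ in Filter.atTop, 1 ≤ Real.log (n : ℝ) :=
      Flog.eventually_ge_atTop _
    filter_upwards [F1, F2, F3, F4, F6, F8] with n hn2k hn2 hnC₁ hnκ hlog2k hlog1
    -- abbreviations
    set x : ℝ := (n : ℝ) with hx
    have hx2 : (2:ℝ) ≤ x := by rw [hx]; exact_mod_cast hn2
    have hx1 : (1:ℝ) ≤ x := by linarith only [hx2]
    have hx0 : (0:ℝ) < x := by linarith only [hx2]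
    have hL0 : 0 < Real.log x := lt_of_lt_of_le one_pos hlog1
    set N : ℕ := ∑ i ∈ Finset.Icc 1 k, n.choose i with hN
    set r : ℕ := ⌈((N : ℕ) : ℝ) / 2⌉₊ with hr
    set t : ℕ := ⌈(1:ℝ) * x ^ ((k : ℝ) / 2)⌉₊ with ht
    set p : ℝ := 1 / 2 - C₁ * Real.sqrt (Real.log x) / x ^ ((k : ℝ) / 2) with hp
    set θ : ℝ := Real.sqrt (Real.log x) / x ^ ((k : ℝ) / 2) with hθdef
    have hrp0 : (0:ℝ) < x ^ ((k : ℝ) / 2) := Real.rpow_pos_of_pos hx0 _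
    have hsqrt0 : 0 < Real.sqrt (Real.log x) := Real.sqrt_pos.2 hL0
    have hθ : 0 < θ := div_pos hsqrt0 hrp0
    -- x ≤ x^(k/2), and x^(3/2) ≤ x^(k/2)
    have hk32 : (3:ℝ)/2 ≤ (k:ℝ)/2 := by
      have : (3:ℝ) ≤ (k:ℝ) := by exact_mod_cast hk
      linarith only [this]
    have hxk2_ge : x ≤ x ^ ((k : ℝ) / 2) := by
      nth_rewrite 1 [← Real.rpow_one x]
      exact Real.rpow_le_rpow_of_exponent_le hx1 (by linarith only [hk32])
    have hx32_le : x ^ ((3:ℝ)/2) ≤ x ^ ((k : ℝ) / 2) :=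
      Real.rpow_le_rpow_of_exponent_le hx1 hk32
    have hsqrt_le : Real.sqrt (Real.log x) ≤ x ^ ((1:ℝ)/2) := by
      rw [← Real.sqrt_eq_rpow x]
      exact Real.sqrt_le_sqrt (Real.log_le_self hx0.le)
    have hhalfmul : x ^ ((1:ℝ)/2) * x = x ^ ((3:ℝ)/2) := by
      nth_rewrite 2 [← Real.rpow_one x]
      rw [← Real.rpow_add hx0]
      norm_num
    have hθm : θ * x ≤ 1 := by
      rw [hθdef, div_mul_eq_mul_div, div_le_one hrp0]
      calc Real.sqrt (Real.log x) * x ≤ x ^ ((1:ℝ)/2) * x :=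
            mul_le_mul_of_nonneg_right hsqrt_le hx0.le
        _ = x ^ ((3:ℝ)/2) := hhalfmul
        _ ≤ x ^ ((k:ℝ)/2) := hx32_le
    have hp_ub : C₁ * Real.sqrt (Real.log x) / x ^ ((k:ℝ)/2) ≤ C₁ / x := by
      rw [div_le_div_iff₀ hrp0 hx0]
      calc C₁ * Real.sqrt (Real.log x) * x ≤ C₁ * (x ^ ((1:ℝ)/2) * x) := by
            rw [mul_assoc]
            apply mul_le_mul_of_nonneg_left _ hC₁pos.le
            exact mul_le_mul_of_nonneg_right hsqrt_le hx0.le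
        _ = C₁ * x ^ ((3:ℝ)/2) := by rw [hhalfmul]
        _ ≤ C₁ * x ^ ((k:ℝ)/2) := mul_le_mul_of_nonneg_left hx32_le hC₁pos.le
    have hp0 : 0 ≤ p := by
      rw [hp]
      have h1 : C₁ / x ≤ 1/2 := by
        rw [div_le_iff₀ hx0]
        linarith only [hnC₁]
      linarith only [hp_ub, h1]
    have hp_half : p ≤ 1/2 := by
      rw [hp]
      have h1 : 0 ≤ C₁ * Real.sqrt (Real.log x) / x ^ ((k:ℝ)/2) := by positivity
      linarith only [h1]
    -- t bounds
    have ht_lb : x ^ ((k:ℝ)/2) ≤ (t:ℝ) := by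
      have h2 : (1:ℝ) * x ^ ((k:ℝ)/2) ≤ (t:ℝ) := Nat.le_ceil _
      rw [one_mul] at h2
      exact h2
    have ht_ub : (t:ℝ) ≤ x ^ ((k:ℝ)/2) + 1 := by
      have h0 : (0:ℝ) ≤ (1:ℝ) * x ^ ((k:ℝ)/2) := by positivity
      have h2 : (t:ℝ) < (1:ℝ) * x ^ ((k:ℝ)/2) + 1 := Nat.ceil_lt_add_one h0
      rw [one_mul] at h2
      exact le_of_lt h2
    -- N bounds
    have hNk : ((n.choose k : ℕ) : ℝ) ≤ (N:ℝ) := by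
      have : n.choose k ≤ N := Finset.single_le_sum (f := fun i => n.choose i)
        (fun i _ => Nat.zero_le _) (Finset.mem_Icc.2 ⟨by omega, le_refl k⟩)
      exact_mod_cast this
    have hN_lb : x ^ (k:ℕ) / (κ:ℝ) ≤ (N:ℝ) := by
      have hbase : x / 2 ≤ ((n + 1 - k : ℕ) : ℝ) := by
        have hkn : k ≤ n + 1 := by omega
        rw [Nat.cast_sub hkn]
        push_cast
        have : (2:ℝ) * k ≤ x := by
          rw [hx]
          exact_mod_cast hn2k
        linarith only [this]
      have hpow : (x/2) ^ (k:ℕ) ≤ ((n + 1 - k : ℕ) : ℝ) ^ (k:ℕ) :=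
        pow_le_pow_left₀ (by positivity) hbase k
      have hmain := Nat.pow_le_choose (α := ℝ) k n
      have hfac : (0:ℝ) < (k.factorial : ℝ) := by
        exact_mod_cast k.factorial_pos
      have h1 : (x/2) ^ (k:ℕ) / (k.factorial : ℝ) ≤ ((n.choose k : ℕ) : ℝ) := by
        refine le_trans ?_ hmain
        gcongr
      have hκcast : (κ:ℝ) = 2^(k:ℕ) * (k.factorial : ℝ) := by
        rw [hκ]; push_cast; ring
      have h2 : x ^ (k:ℕ) / (κ:ℝ) = (x/2) ^ (k:ℕ) / (k.factorial : ℝ) := by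
        rw [div_pow, div_div, ← hκcast]
      rw [h2]
      exact le_trans h1 hNk
    have hN_ub : (N:ℝ) ≤ (k:ℝ) * x ^ (k:ℕ) := by
      have h1 : N ≤ k * n ^ k := by
        rw [hN]
        calc ∑ i ∈ Finset.Icc 1 k, n.choose i ≤ ∑ _i ∈ Finset.Icc 1 k, n ^ k := by
              apply Finset.sum_le_sum
              intro i hi
              exact le_trans (Nat.choose_le_pow n i)
                (Nat.pow_le_pow_right (by omega) (Finset.mem_Icc.1 hi).2)
          _ = k * n ^ k := by
              rw [Finset.sum_const, Nat.card_Icc, smul_eq_mul]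
              have he : k + 1 - 1 = k := by omega
              rw [he]
      calc (N:ℝ) ≤ ((k * n ^ k : ℕ) : ℝ) := by exact_mod_cast h1
        _ = (k:ℝ) * x ^ (k:ℕ) := by push_cast; ring
    have hr_lb : (N:ℝ)/2 ≤ (r:ℝ) := Nat.le_ceil _
    have hxkhalf : x ^ ((k:ℝ)/2) * x ^ ((k:ℝ)/2) = x ^ (k:ℕ) := by
      rw [← Real.rpow_add hx0, ← Real.rpow_natCast x k]
      congr 1
      ring
    have hsqsq : Real.sqrt (Real.log x) * Real.sqrt (Real.log x) = Real.log x :=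
      Real.mul_self_sqrt hL0.le
    -- master hypotheses
    have hκR1 : (1:ℝ) ≤ (κ:ℝ) := by exact_mod_cast hκpos
    have h2xk : (2:ℝ) ≤ x ^ ((k:ℝ)/2) := le_trans hx2 hxk2_ge
    have hrtR : 2*(t:ℝ) + 1 ≤ (r:ℝ) := by
      have h5 : 10 * (κ:ℝ) ≤ x ^ ((k:ℝ)/2) := le_trans hnκ hxk2_ge
      have hNhalf : 5 * x ^ ((k:ℝ)/2) ≤ (N:ℝ)/2 := by
        have e1 : x ^ (k:ℕ) / (κ:ℝ) = x ^ ((k:ℝ)/2) * (x ^ ((k:ℝ)/2) / κ) := by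
          rw [← hxkhalf]; ring
        have e2 : 10 ≤ x ^ ((k:ℝ)/2) / (κ:ℝ) := by
          rw [le_div_iff₀ (by positivity)]
          linarith only [h5]
        have e3 : 10 * x ^ ((k:ℝ)/2) ≤ x ^ (k:ℕ) / (κ:ℝ) := by
          rw [e1]
          calc 10 * x ^ ((k:ℝ)/2) = x ^ ((k:ℝ)/2) * 10 := by ring
            _ ≤ x ^ ((k:ℝ)/2) * (x ^ ((k:ℝ)/2) / κ) :=
                mul_le_mul_of_nonneg_left e2 (by positivity)
        have e4 : 10 * x ^ ((k:ℝ)/2) ≤ (N:ℝ) := le_trans e3 hN_lb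
        linarith only [e4]
      calc 2*(t:ℝ) + 1 ≤ 2 * x ^ ((k:ℝ)/2) + 3 := by linarith only [ht_ub]
        _ ≤ 5 * x ^ ((k:ℝ)/2) := by linarith only [h2xk]
        _ ≤ (N:ℝ)/2 := hNhalf
        _ ≤ (r:ℝ) := hr_lb
    have hrt : 2*t + 1 ≤ r := by
      have : ((2*t + 1 : ℕ) : ℝ) ≤ (r:ℝ) := by push_cast; linarith only [hrtR]
      exact_mod_cast this
    have hjt : n ≤ t + 1 := by
      have : (n:ℝ) ≤ (t:ℝ) := le_trans hxk2_ge ht_lb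
      have h2 : n ≤ t := by exact_mod_cast this
      omega
    -- apply the master bound
    have hmaster := master_bound (k := k) (n := n) (p := p) (θ := θ) (t := t)
      (by omega) (by omega) hp0 hp_half hθ hθm hrt hjt
    -- bound the exponent
    set Ξ : ℝ := -(θ * ((n : ℝ) * ((r : ℝ) - 2 * t)))
          + p * θ * ((n : ℝ) * (N : ℝ))
          + p * θ ^ 2 * ((n : ℝ) * (N : ℝ) + (n : ℝ) ^ 2 * ((3 * k * n ^ (k-1) : ℕ) : ℝ)) with hΞ
    have hC₁κ : C₁ / (2 * (κ:ℝ)) = 3*(k:ℝ) + 4 := by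
      rw [hC₁]
      push_cast
      field_simp
    have hΞ_le : Ξ ≤ -(((k:ℝ)+4) * (x * Real.log x)) := by
      have hθx : 0 ≤ θ * x := by positivity
      -- linear part
      have hdev : (C₁/(2*(κ:ℝ))) * Real.sqrt (Real.log x) * x ^ ((k:ℝ)/2) ≤
          ((r:ℝ) - 2*t) - p * (N:ℝ) := by
        have e0 : (1/2 - p) * (N:ℝ) = C₁ * Real.sqrt (Real.log x) / x ^ ((k:ℝ)/2) * N := by
          rw [hp]; ring
        have e1 : C₁ * Real.sqrt (Real.log x) / x ^ ((k:ℝ)/2) * (x ^ (k:ℕ) / κ) =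
            (C₁/(κ:ℝ)) * Real.sqrt (Real.log x) * x ^ ((k:ℝ)/2) := by
          rw [← hxkhalf]
          field_simp
        have e2 : (1/2 - p) * (N:ℝ) ≥ (C₁/(κ:ℝ)) * Real.sqrt (Real.log x) * x ^ ((k:ℝ)/2) := by
          rw [e0, ← e1]
          apply mul_le_mul_of_nonneg_left hN_lb
          positivity
        have e3 : 2*(t:ℝ) ≤ 3 * x ^ ((k:ℝ)/2) := by linarith only [ht_ub, h2xk]
        have e4 : 3 * x ^ ((k:ℝ)/2) ≤ (C₁/(2*(κ:ℝ))) * Real.sqrt (Real.log x) * x ^ ((k:ℝ)/2) := by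
          apply mul_le_mul_of_nonneg_right _ hrp0.le
          have hs1 : (1:ℝ) ≤ Real.sqrt (Real.log x) := Real.one_le_sqrt.2 hlog1
          have h3c : (3:ℝ) ≤ C₁/(2*(κ:ℝ)) := by
            rw [hC₁κ]
            have : (3:ℝ) ≤ (k:ℝ) := by exact_mod_cast hk
            linarith only [this]
          calc (3:ℝ) = 3 * 1 := by ring
            _ ≤ (C₁/(2*(κ:ℝ))) * Real.sqrt (Real.log x) :=
                mul_le_mul h3c hs1 one_pos.le (by positivity)
        have e5 : (N:ℝ)/2 - 2*t - p*N ≥ (C₁/(2*(κ:ℝ))) * Real.sqrt (Real.log x) * x ^ ((k:ℝ)/2) := by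
          have : (1/2 - p) * (N:ℝ) - 2*t ≥
              (C₁/(κ:ℝ)) * Real.sqrt (Real.log x) * x ^ ((k:ℝ)/2)
                - 3 * x ^ ((k:ℝ)/2) := by linarith only [e2, e3]
          have e6 : (C₁/(κ:ℝ)) * Real.sqrt (Real.log x) * x ^ ((k:ℝ)/2)
              = 2 * ((C₁/(2*(κ:ℝ))) * Real.sqrt (Real.log x) * x ^ ((k:ℝ)/2)) := by
            have hκ0 : (κ:ℝ) ≠ 0 := by positivity
            field_simp
          linarith only [e4, e6, this]
        linarith only [e5, hr_lb]
      have hlin : -(θ * (x * ((r:ℝ) - 2*t))) + p * θ * (x * (N:ℝ)) ≤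
          -((3*(k:ℝ)+4) * (x * Real.log x)) := by
        have e7 : -(θ * (x * ((r:ℝ) - 2*t))) + p * θ * (x * (N:ℝ))
            = -(θ * x * (((r:ℝ) - 2*t) - p * N)) := by ring
        rw [e7]
        have e8 : θ * x * ((C₁/(2*(κ:ℝ))) * Real.sqrt (Real.log x) * x ^ ((k:ℝ)/2))
            = (3*(k:ℝ)+4) * (x * Real.log x) := by
          have hne : x ^ ((k:ℝ)/2) ≠ 0 := ne_of_gt hrp0
          calc θ * x * ((C₁/(2*(κ:ℝ))) * Real.sqrt (Real.log x) * x ^ ((k:ℝ)/2))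
              = (C₁/(2*(κ:ℝ))) * x * (Real.sqrt (Real.log x) * Real.sqrt (Real.log x))
                  * (x ^ ((k:ℝ)/2) / x ^ ((k:ℝ)/2)) := by
                rw [hθdef]
                field_simp
            _ = (3*(k:ℝ)+4) * (x * Real.log x) := by
                rw [hsqsq, div_self hne, hC₁κ]
                ring
        have e9 : θ * x * ((C₁/(2*(κ:ℝ))) * Real.sqrt (Real.log x) * x ^ ((k:ℝ)/2)) ≤
            θ * x * (((r:ℝ) - 2*t) - p * N) := mul_le_mul_of_nonneg_left hdev hθx
        rw [e8] at e9
        linarith only [e9]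
      -- quadratic part
      have hθsq : θ^2 = Real.log x / x ^ (k:ℕ) := by
        rw [hθdef, div_pow, sq, sq, hsqsq, hxkhalf]
      have hΛcast : ((3 * k * n ^ (k-1) : ℕ) : ℝ) = 3*(k:ℝ)*x^((k:ℕ)-1) := by
        push_cast
        ring
      have hxsq : x^2 * (3*(k:ℝ)*x^((k:ℕ)-1)) = 3*(k:ℝ)*x^(k+1) := by
        have hpp : x^2 * x^((k:ℕ)-1) = x^(k+1) := by
          rw [← pow_add]
          congr 1
          omega
        calc x^2 * (3*(k:ℝ)*x^((k:ℕ)-1)) = 3*(k:ℝ)*(x^2 * x^((k:ℕ)-1)) := by ring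
          _ = 3*(k:ℝ)*x^(k+1) := by rw [hpp]
      have hxN : x * (N:ℝ) ≤ (k:ℝ) * x^(k+1) := by
        calc x * (N:ℝ) ≤ x * ((k:ℝ) * x ^ (k:ℕ)) :=
              mul_le_mul_of_nonneg_left hN_ub hx0.le
          _ = (k:ℝ) * x^(k+1) := by rw [pow_succ]; ring
      have hquad : p * θ^2 * (x * (N:ℝ) + x^2 * ((3 * k * n ^ (k-1) : ℕ) : ℝ)) ≤
          2*(k:ℝ) * (x * Real.log x) := by
        have hq1 : x * (N:ℝ) + x^2 * ((3 * k * n ^ (k-1) : ℕ) : ℝ) ≤ 4*(k:ℝ)*x^(k+1) := by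
          rw [hΛcast]
          linarith [hxsq, hxN]
        have hq2 : 0 ≤ x * (N:ℝ) + x^2 * ((3 * k * n ^ (k-1) : ℕ) : ℝ) := by positivity
        have hq3 : p * θ^2 ≤ (1/2) * (Real.log x / x ^ (k:ℕ)) := by
          rw [hθsq]
          apply mul_le_mul_of_nonneg_right hp_half
          positivity
        have hq4 : 0 ≤ θ^2 := sq_nonneg θ
        have hq5 : p * θ^2 * (x * (N:ℝ) + x^2 * ((3 * k * n ^ (k-1) : ℕ) : ℝ)) ≤
            (1/2) * (Real.log x / x ^ (k:ℕ)) * (4*(k:ℝ)*x^(k+1)) := by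
          apply mul_le_mul hq3 hq1 hq2
          positivity
        refine le_trans hq5 ?_
        have e10 : (1/2) * (Real.log x / x ^ (k:ℕ)) * (4*(k:ℝ)*x^(k+1)) =
            2*(k:ℝ) * (x * Real.log x) * (x ^ (k:ℕ) / x ^ (k:ℕ)) := by
          rw [pow_succ]
          field_simp
          ring
        rw [e10, div_self (by positivity), mul_one]
      rw [hΞ]
      have hxfin : (n:ℝ) = x := rfl
      rw [hxfin]
      have hsum := add_le_add hlin hquad
      have : (3*(k:ℝ)+4) * (x * Real.log x) - 2*(k:ℝ) * (x * Real.log x)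
          = ((k:ℝ)+4) * (x * Real.log x) := by ring
      linarith only [hsum, this]
    -- final numeric bound
    have hfinal : (2:ℝ) ^ n * ((N : ℕ) : ℝ) ^ n * Real.exp Ξ ≤ Real.exp (-x) := by
      have hb1 : ((N : ℕ) : ℝ) ^ n ≤ ((k:ℝ) * x ^ (k:ℕ)) ^ n :=
        pow_le_pow_left₀ (by positivity) hN_ub n
      have hb2 : (2:ℝ) ^ n * ((N : ℕ) : ℝ) ^ n ≤ (2 * (k:ℝ) * x ^ (k:ℕ)) ^ n := by
        calc (2:ℝ) ^ n * ((N : ℕ) : ℝ) ^ n ≤ (2:ℝ) ^ n * ((k:ℝ) * x ^ (k:ℕ)) ^ n :=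
              mul_le_mul_of_nonneg_left hb1 (by positivity)
          _ = (2 * (k:ℝ) * x ^ (k:ℕ)) ^ n := by rw [← mul_pow]; ring_nf
      have hkpos : (0:ℝ) < (k:ℝ) := by exact_mod_cast (by omega : 0 < k)
      have hbase_pos : (0:ℝ) < 2 * (k:ℝ) * x ^ (k:ℕ) := by positivity
      have hnx : ((n:ℕ):ℝ) = x := hx.symm
      have hb3 : (2 * (k:ℝ) * x ^ (k:ℕ)) ^ n = Real.exp (x * Real.log (2 * (k:ℝ) * x ^ (k:ℕ))) := by
        rw [← hnx, ← Real.log_pow, Real.exp_log (pow_pos hbase_pos n)]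
      have hb4 : Real.log (2 * (k:ℝ) * x ^ (k:ℕ)) = Real.log (2*(k:ℝ)) + (k:ℝ) * Real.log x := by
        rw [Real.log_mul (by positivity) (by positivity), Real.log_pow]
      have hb5 : x * Real.log (2 * (k:ℝ) * x ^ (k:ℕ)) + (-(((k:ℝ)+4) * (x * Real.log x))) ≤ -x := by
        rw [hb4]
        have hd : Real.log (2*(k:ℝ)) + 1 - 4 * Real.log x ≤ 0 := by linarith only [hlog2k]
        have hprod : x * (Real.log (2*(k:ℝ)) + 1 - 4 * Real.log x) ≤ 0 :=
          mul_nonpos_of_nonneg_of_nonpos hx0.le hd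
        linarith only [hprod]
      calc (2:ℝ) ^ n * ((N : ℕ) : ℝ) ^ n * Real.exp Ξ
          ≤ (2 * (k:ℝ) * x ^ (k:ℕ)) ^ n * Real.exp Ξ :=
            mul_le_mul_of_nonneg_right hb2 (Real.exp_pos _).le
        _ ≤ (2 * (k:ℝ) * x ^ (k:ℕ)) ^ n * Real.exp (-(((k:ℝ)+4) * (x * Real.log x))) :=
            mul_le_mul_of_nonneg_left (Real.exp_le_exp.2 hΞ_le) (by positivity)
        _ = Real.exp (x * Real.log (2 * (k:ℝ) * x ^ (k:ℕ)) + (-(((k:ℝ)+4) * (x * Real.log x)))) := by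
            rw [hb3, ← Real.exp_add]
        _ ≤ Real.exp (-x) := Real.exp_le_exp.2 hb5
    -- put it together
    have hp1 : p ≤ 1 := le_trans hp_half (by norm_num)
    set E : Finset (Fin n → Bool) → Prop := fun A0 =>
      boot2Sets (cubeGraph n k) r t A0 3 = boot2Sets (cubeGraph n k) r t A0 2 with hE
    have hcompl : probEvent p E + probEvent p (fun A0 => ¬ E A0) = 1 :=
      probEvent_add_compl p E
    have hq0 : 0 ≤ probEvent p (fun A0 => ¬ E A0) := probEvent_nonneg hp0 hp1 _
    have hqb : probEvent p (fun A0 => ¬ E A0) ≤ Real.exp (-x) :=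
      le_trans hmaster hfinal
    have hfn : f n = probEvent p E := rfl
    constructor
    · rw [hfn]
      linarith only [hcompl, hqb]
    · rw [hfn]
      linarith only [hcompl, hq0]
  -- squeeze
  have hlim1 : Filter.Tendsto (fun n : ℕ => 1 - Real.exp (-(n:ℝ))) Filter.atTop (nhds 1) := by
    have h0 : Filter.Tendsto (fun n : ℕ => Real.exp (-(n:ℝ))) Filter.atTop (nhds 0) :=
      Real.tendsto_exp_neg_atTop_nhds_zero.comp tendsto_natCast_atTop_atTop
    have := tendsto_const_nhds (x := (1:ℝ)) (f := Filter.atTop (α := ℕ)) |>.sub h0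
    simpa using this
  exact tendsto_of_tendsto_of_tendsto_of_le_of_le' hlim1 tendsto_const_nhds
    (key.mono fun n h => h.1) (key.mono fun n h => h.2)

end final


/-- Fix an integer `k ≥ 3`.  There are constants `C₁(k), C₂(k) > 0` such
that in the process `Boot3(t)` (implemented by `boot2Sets`, which has the same update rule)
on `Q_{k,n}` with base threshold `⌈N/2⌉` (where `N = ∑_{i=1}^k C(n,i)`),
`t = ⌈C₂(k) n^{k/2}⌉` and initial infection probability
`p = 1/2 - C₁(k)√(log n)/n^{k/2}`, we have `P(A_3 = A_2) → 1` as `n → ∞`. -/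
theorem boot3_stabilizes_Qkn (k : ℕ) (hk : 3 ≤ k) :
    ∃ C₁ C₂ : ℝ, 0 < C₁ ∧ 0 < C₂ ∧
      Filter.Tendsto
        (fun n : ℕ =>
          probEvent (1 / 2 - C₁ * Real.sqrt (Real.log (n : ℝ)) / (n : ℝ) ^ ((k : ℝ) / 2))
            (fun A0 : Finset (Fin n → Bool) =>
              boot2Sets (cubeGraph n k) ⌈((∑ i ∈ Finset.Icc 1 k, n.choose i : ℕ) : ℝ) / 2⌉₊
                  ⌈C₂ * (n : ℝ) ^ ((k : ℝ) / 2)⌉₊ A0 3 =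
                boot2Sets (cubeGraph n k) ⌈((∑ i ∈ Finset.Icc 1 k, n.choose i : ℕ) : ℝ) / 2⌉₊
                  ⌈C₂ * (n : ℝ) ^ ((k : ℝ) / 2)⌉₊ A0 2))
        Filter.atTop (nhds 1) :=
  boot3_aux k hk

end
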